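/- Define σ(a,(b,c)) = 1 if a = b+c in Z_3 and −1 otherwise, and δ(a,(b,c)) = σ(a,(b,c))·(b,c) ∈ Z×Z, for a ∈ {1,2} and (b,c) ∈ {(0,1),(1,0),(1,1)}. Then for any triangle in a dappled graph, the sum of δ(ψ(v_i)−ψ(v_{i−1}), φ(v_i)−φ(v_{i−1})) over the three edges of the triangle (traversed cyclically) equals (0,0). -/
import Mathlib


/-- `σ(a,(b,c)) = 1` if `a = b + c` and `-1` otherwise, where `a ∈ {1,2}` and
`(b,c) ∈ {(0,1),(1,0),(1,1)}` are the integer representatives of the hue difference and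
the color difference of two adjacent vertices. -/
noncomputable def sigma (a : ZMod 3) (bc : ZMod 2 × ZMod 2) : ℤ :=
  if (a.val : ℤ) = (bc.1.val : ℤ) + (bc.2.val : ℤ) then 1 else -1

/-- `δ(a,(b,c)) = σ(a,(b,c)) · (b,c) ∈ ℤ × ℤ`. -/
noncomputable def deltaStep (a : ZMod 3) (bc : ZMod 2 × ZMod 2) : ℤ × ℤ :=
  (sigma a bc * (bc.1.val : ℤ), sigma a bc * (bc.2.val : ℤ))

/-- `δ(u,v)` for adjacent vertices `u, v` of a dappled graph. -/
noncomputable def delta {α : Type*} (ψ : α → ZMod 3) (φ : α → ZMod 2 × ZMod 2)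
    (u v : α) : ℤ × ℤ :=
  deltaStep (ψ v - ψ u) (φ v - φ u)


lemma key : ∀ (a₁ a₂ a₃ : ZMod 3) (b₁ b₂ b₃ : ZMod 2 × ZMod 2),
    a₁ + a₂ + a₃ = 0 → b₁ + b₂ + b₃ = 0 →
    a₁ ≠ 0 → a₂ ≠ 0 → a₃ ≠ 0 → b₁ ≠ 0 → b₂ ≠ 0 → b₃ ≠ 0 →
    deltaStep a₁ b₁ + deltaStep a₂ b₂ + deltaStep a₃ b₃ = (0, 0) := by decide

/-- Around any triangle of a dappled graph, the sum of the `δ` values of the three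
cyclically traversed edges is `(0,0)`. -/
theorem delta_triangle_sum {α : Type*} (G : SimpleGraph α)
    (ψ : α → ZMod 3) (φ : α → ZMod 2 × ZMod 2)
    (hψ : ∀ u v, G.Adj u v → ψ u ≠ ψ v) (hφ : ∀ u v, G.Adj u v → φ u ≠ φ v)
    (v₀ v₁ v₂ : α) (h₀₁ : G.Adj v₀ v₁) (h₁₂ : G.Adj v₁ v₂) (h₂₀ : G.Adj v₂ v₀) :
    delta ψ φ v₀ v₁ + delta ψ φ v₁ v₂ + delta ψ φ v₂ v₀ = (0, 0) := by
  have := key (ψ v₁ - ψ v₀) (ψ v₂ - ψ v₁) (ψ v₀ - ψ v₂)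
    (φ v₁ - φ v₀) (φ v₂ - φ v₁) (φ v₀ - φ v₂)
    (by ring) (by ring)
    (sub_ne_zero.mpr fun h => hψ v₀ v₁ h₀₁ h.symm)
    (sub_ne_zero.mpr fun h => hψ v₁ v₂ h₁₂ h.symm)
    (sub_ne_zero.mpr fun h => hψ v₂ v₀ h₂₀ h.symm)
    (sub_ne_zero.mpr fun h => hφ v₀ v₁ h₀₁ h.symm)
    (sub_ne_zero.mpr fun h => hφ v₁ v₂ h₁₂ h.symm)
    (sub_ne_zero.mpr fun h => hφ v₂ v₀ h₂₀ h.symm)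
  simpa [delta] using this
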